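/- Let α ∈ ℝ and let a, b be nonzero complex numbers. For every u ∈ ℓ²(ℤ;ℂ²): P(H₀(P^⊥u)) = b·u₁(−1)·e₀⁺, where e₀⁺ ∈ ℓ²(ℤ;ℂ²) is the sequence whose first component is 0 and whose second component is the indicator of {0}; and P^⊥(H₀(Pu)) = conj(b)·u₂(0)·e₋₁⁻, where e₋₁⁻ ∈ ℓ²(ℤ;ℂ²) is the sequence whose first component is the indicator of {−1} and whose second component is 0. In particular, the bounded operators P∘H₀∘P^⊥ and P^⊥∘H₀∘P each have rank at most one. -/

import Mathlib

open Complex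

/-- With `P` the orthogonal projection of `ℓ²(ℤ;ℂ²)` onto sequences
supported in `ℤ₊` and `P^⊥ = 1 − P`, the operators `P∘H₀∘P^⊥` and `P^⊥∘H₀∘P` are
explicit rank-one expressions: `P(H₀(P^⊥u)) = b·u₁(−1)·e₀⁺` and
`P^⊥(H₀(Pu)) = conj(b)·u₂(0)·e₋₁⁻` (stated componentwise), and in particular both
operators have rank at most one. -/
theorem P_H0_Pperp_rank_one (α : ℝ) (a b : ℂ) (ha : a ≠ 0) (hb : b ≠ 0)
    (H₀ : lp (fun _ : ℤ => EuclideanSpace ℂ (Fin 2)) 2 →L[ℂ]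
          lp (fun _ : ℤ => EuclideanSpace ℂ (Fin 2)) 2)
    (hH₀ : ∀ (u : lp (fun _ : ℤ => EuclideanSpace ℂ (Fin 2)) 2) (n : ℤ),
      H₀ u n 0 = (α : ℂ) * u n 0 + (starRingEnd ℂ) a * u n 1
          + (starRingEnd ℂ) b * u (n + 1) 1 ∧
      H₀ u n 1 = a * u n 0 + b * u (n - 1) 0 - (α : ℂ) * u n 1)
    (P : lp (fun _ : ℤ => EuclideanSpace ℂ (Fin 2)) 2 →L[ℂ]
         lp (fun _ : ℤ => EuclideanSpace ℂ (Fin 2)) 2)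
    (hP : ∀ (u : lp (fun _ : ℤ => EuclideanSpace ℂ (Fin 2)) 2) (n : ℤ) (i : Fin 2),
      P u n i = if 0 ≤ n then u n i else 0) :
    (∀ (u : lp (fun _ : ℤ => EuclideanSpace ℂ (Fin 2)) 2) (n : ℤ),
      (P (H₀ ((1 - P) u)) n 0 = 0 ∧
        P (H₀ ((1 - P) u)) n 1 = if n = 0 then b * u (-1) 0 else 0) ∧
      ((1 - P) (H₀ (P u)) n 0 = (if n = -1 then (starRingEnd ℂ) b * u 0 1 else 0) ∧
        (1 - P) (H₀ (P u)) n 1 = 0)) ∧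
    LinearMap.rank ((P ∘L H₀ ∘L (1 - P)) :
      lp (fun _ : ℤ => EuclideanSpace ℂ (Fin 2)) 2 →ₗ[ℂ]
      lp (fun _ : ℤ => EuclideanSpace ℂ (Fin 2)) 2) ≤ 1 ∧
    LinearMap.rank (((1 - P) ∘L H₀ ∘L P) :
      lp (fun _ : ℤ => EuclideanSpace ℂ (Fin 2)) 2 →ₗ[ℂ]
      lp (fun _ : ℤ => EuclideanSpace ℂ (Fin 2)) 2) ≤ 1 := by
  classical
  have hperp : ∀ (u : lp (fun _ : ℤ => EuclideanSpace ℂ (Fin 2)) 2) (n : ℤ) (i : Fin 2),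
      ((1 - P) u) n i = if 0 ≤ n then 0 else u n i := by
    intro u n i
    have h1 : ((1 - P) u) = u - P u := by
      simp [ContinuousLinearMap.sub_apply]
    have h2 : ((u - P u : lp (fun _ : ℤ => EuclideanSpace ℂ (Fin 2)) 2) : ∀ _ : ℤ,
        EuclideanSpace ℂ (Fin 2)) n i = u n i - P u n i := by
      rw [lp.coeFn_sub]; rfl
    rw [h1, h2, hP]
    split <;> simp
  have key : ∀ (u : lp (fun _ : ℤ => EuclideanSpace ℂ (Fin 2)) 2) (n : ℤ),
      (P (H₀ ((1 - P) u)) n 0 = 0 ∧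
        P (H₀ ((1 - P) u)) n 1 = if n = 0 then b * u (-1) 0 else 0) ∧
      ((1 - P) (H₀ (P u)) n 0 = (if n = -1 then (starRingEnd ℂ) b * u 0 1 else 0) ∧
        (1 - P) (H₀ (P u)) n 1 = 0) := by
    intro u n
    refine ⟨⟨?_, ?_⟩, ?_, ?_⟩
    · rw [hP]
      split
      · next hn =>
        rw [(hH₀ _ n).1, hperp, hperp, hperp, if_pos hn, if_pos hn,
          if_pos (by omega : (0:ℤ) ≤ n + 1)]
        ring
      · rfl
    · rw [hP]
      split
      · next hn =>
        rw [(hH₀ _ n).2, hperp, hperp, hperp, if_pos hn, if_pos hn]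
        by_cases h0 : n = 0
        · subst h0
          simp only [show (0:ℤ) - 1 = -1 from by norm_num]
          rw [if_neg (by norm_num : ¬(0:ℤ) ≤ -1)]
          simp
        · rw [if_pos (by omega : (0:ℤ) ≤ n - 1), if_neg h0]
          ring
      · next hn =>
        rw [if_neg (by omega : n ≠ 0)]
    · rw [hperp]
      split
      · next hn => rw [if_neg (by omega : n ≠ -1)]
      · next hn =>
        rw [(hH₀ _ n).1, hP, hP, hP, if_neg hn, if_neg hn]
        by_cases h1 : n = -1
        · subst h1
          simp only [show (-1:ℤ) + 1 = 0 from by norm_num]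
          rw [if_pos le_rfl]
          simp
        · rw [if_neg (by omega : ¬ (0:ℤ) ≤ n + 1), if_neg h1]
          ring
    · rw [hperp]
      split
      · rfl
      · next hn =>
        rw [(hH₀ _ n).2, hP, hP, hP, if_neg hn, if_neg hn,
          if_neg (by omega : ¬ (0:ℤ) ≤ n - 1)]
        ring
  refine ⟨key, ?_, ?_⟩
  · set v : lp (fun _ : ℤ => EuclideanSpace ℂ (Fin 2)) 2 :=
      lp.single 2 (0 : ℤ) (EuclideanSpace.single (1 : Fin 2) (1 : ℂ)) with hv
    have heq : ∀ u, (P ∘L H₀ ∘L (1 - P)) u = (b * u (-1) 0) • v := by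
      intro u
      have hcomp : (P ∘L H₀ ∘L (1 - P)) u = P (H₀ ((1 - P) u)) := rfl
      rw [hcomp]
      apply lp.ext
      funext n
      ext i
      have hsmul : ∀ j : Fin 2, (((b * u (-1) 0) • v :
          lp (fun _ : ℤ => EuclideanSpace ℂ (Fin 2)) 2) :
          ∀ _ : ℤ, EuclideanSpace ℂ (Fin 2)) n j = (b * u (-1) 0) * v n j := by
        intro j; rw [lp.coeFn_smul]; rfl
      rw [hsmul, hv]
      by_cases hn0 : n = (0 : ℤ)
      · subst hn0
        rw [lp.single_apply_self]
        fin_cases i <;>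
          simp only [Fin.zero_eta, Fin.mk_one, (key u 0).1.1, (key u 0).1.2] <;>
          simp [EuclideanSpace.single_apply]
      · rw [lp.single_apply_ne _ _ _ hn0]
        fin_cases i <;>
          simp only [Fin.zero_eta, Fin.mk_one, (key u n).1.1, (key u n).1.2] <;>
          simp [hn0]
    have hsub : LinearMap.range ((P ∘L H₀ ∘L (1 - P)) :
        lp (fun _ : ℤ => EuclideanSpace ℂ (Fin 2)) 2 →ₗ[ℂ]
        lp (fun _ : ℤ => EuclideanSpace ℂ (Fin 2)) 2) ≤ Submodule.span ℂ {v} := by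
      rintro x ⟨u, rfl⟩
      rw [ContinuousLinearMap.coe_coe, heq u]
      exact Submodule.smul_mem _ _ (Submodule.mem_span_singleton_self v)
    calc LinearMap.rank _ ≤ Module.rank ℂ (Submodule.span ℂ {v}) := Submodule.rank_mono hsub
      _ ≤ 1 := by simpa using rank_span_le (R := ℂ) {v}
  · set v : lp (fun _ : ℤ => EuclideanSpace ℂ (Fin 2)) 2 :=
      lp.single 2 (-1 : ℤ) (EuclideanSpace.single (0 : Fin 2) (1 : ℂ)) with hv
    have heq : ∀ u, ((1 - P) ∘L H₀ ∘L P) u = ((starRingEnd ℂ) b * u 0 1) • v := by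
      intro u
      have hcomp : ((1 - P) ∘L H₀ ∘L P) u = (1 - P) (H₀ (P u)) := rfl
      rw [hcomp]
      apply lp.ext
      funext n
      ext i
      have hsmul : ∀ j : Fin 2, ((((starRingEnd ℂ) b * u 0 1) • v :
          lp (fun _ : ℤ => EuclideanSpace ℂ (Fin 2)) 2) :
          ∀ _ : ℤ, EuclideanSpace ℂ (Fin 2)) n j = ((starRingEnd ℂ) b * u 0 1) * v n j := by
        intro j; rw [lp.coeFn_smul]; rfl
      rw [hsmul, hv]
      by_cases hn0 : n = (-1 : ℤ)
      · subst hn0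
        rw [lp.single_apply_self]
        fin_cases i <;>
          simp only [Fin.zero_eta, Fin.mk_one, (key u (-1)).2.1, (key u (-1)).2.2] <;>
          simp [EuclideanSpace.single_apply]
      · rw [lp.single_apply_ne _ _ _ hn0]
        fin_cases i <;>
          simp only [Fin.zero_eta, Fin.mk_one, (key u n).2.1, (key u n).2.2] <;>
          simp [hn0]
    have hsub : LinearMap.range (((1 - P) ∘L H₀ ∘L P) :
        lp (fun _ : ℤ => EuclideanSpace ℂ (Fin 2)) 2 →ₗ[ℂ]
        lp (fun _ : ℤ => EuclideanSpace ℂ (Fin 2)) 2) ≤ Submodule.span ℂ {v} := by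
      rintro x ⟨u, rfl⟩
      rw [ContinuousLinearMap.coe_coe, heq u]
      exact Submodule.smul_mem _ _ (Submodule.mem_span_singleton_self v)
    calc LinearMap.rank _ ≤ Module.rank ℂ (Submodule.span ℂ {v}) := Submodule.rank_mono hsub
      _ ≤ 1 := by simpa using rank_span_le (R := ℂ) {v}
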